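/- Every frequency-difference cluster is contained in every greedy consensus tree: if A is a subset of X with cf(A) > cf(B) for all B overlapping A, then any greedy consensus hierarchy (built by adding clusters in order of nonincreasing cf-value, skipping those that overlap previously accepted clusters) contains A. -/

import Mathlib

open scoped Classical

def Overlap {α : Type*} [DecidableEq α] (A B : Finset α) : Prop :=
  (A ∩ B).Nonempty ∧ A ∩ B ≠ A ∧ A ∩ B ≠ B

def IsHierarchyOn {α : Type*} [DecidableEq α] (X : Finset α) (T : Finset (Finset α)) : Prop :=
  (∀ A ∈ T, A ⊆ X ∧ A.Nonempty) ∧ X ∈ T ∧ (∀ x ∈ X, ({x} : Finset α) ∈ T) ∧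
  ∀ A ∈ T, ∀ B ∈ T, A ∩ B = ∅ ∨ A ⊆ B ∨ B ⊆ A

noncomputable def cf {α : Type*} [DecidableEq α] {k : ℕ} (trees : Fin k → Finset (Finset α))
    (A : Finset α) : ℝ :=
  ((Finset.univ.filter fun i => A ∈ trees i).card : ℝ) / k

/-- Greedy consensus: process the clusters of `L` in order, accepting a cluster iff it
overlaps no previously accepted cluster. -/
noncomputable def greedy {α : Type*} [DecidableEq α] (L : List (Finset α)) : List (Finset α) :=
  L.foldl (fun acc C => if ∀ D ∈ acc, ¬ Overlap C D then acc ++ [C] else acc) []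

/-- Every frequency-difference cluster belongs to every greedy consensus tree:
if `L` lists the clusters of the input trees in nonincreasing order of `cf`-value and
`A` is a cluster appearing in the input with `cf A > cf B` for all `B` overlapping `A`,
then greedy processing of `L` accepts `A`. -/
theorem stmt_5 {α : Type*} [DecidableEq α] (X : Finset α) {k : ℕ} (hk : 0 < k)
    (trees : Fin k → Finset (Finset α)) (htrees : ∀ i, IsHierarchyOn X (trees i))
    (L : List (Finset α)) (hLnd : L.Nodup)
    (hLmem : ∀ C, C ∈ L ↔ ∃ i, C ∈ trees i)
    (hLsort : L.Pairwise (fun C D => cf trees C ≥ cf trees D))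
    (A : Finset α) (hAfd : ∀ B, Overlap A B → cf trees A > cf trees B)
    (hAin : ∃ i, A ∈ trees i) :
    A ∈ greedy L := by
  classical
  have hAL : A ∈ L := (hLmem A).2 hAin
  suffices H : ∀ (M : List (Finset α)) (acc : List (Finset α)),
      M.Pairwise (fun C D => cf trees C ≥ cf trees D) →
      (A ∈ acc ∨ (A ∈ M ∧ ∀ D ∈ acc, ¬ Overlap A D)) →
      A ∈ M.foldl (fun acc C => if ∀ D ∈ acc, ¬ Overlap C D then acc ++ [C] else acc) acc by
    exact H L [] hLsort (Or.inr ⟨hAL, by simp⟩)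
  intro M
  induction M with
  | nil =>
    intro acc _ h
    simpa using h.resolve_right (fun h => by simpa using h.1)
  | cons C M' ih =>
    intro acc hsort hinv
    simp only [List.foldl_cons]
    rcases hinv with hAacc | ⟨hAM, hnov⟩
    · apply ih _ hsort.of_cons
      left
      split <;> simp [hAacc]
    · rcases List.mem_cons.mp hAM with rfl | hAM'
      · rw [if_pos (fun D hD => hnov D hD)]
        exact ih _ hsort.of_cons (Or.inl (by simp))
      · apply ih _ hsort.of_cons
        right
        refine ⟨hAM', ?_⟩
        split_ifs with hC
        · intro D hD
          rcases List.mem_append.mp hD with hD | hD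
          · exact hnov D hD
          · simp only [List.mem_singleton] at hD
            subst hD
            intro hov
            have h1 := hAfd D hov
            have h2 : cf trees D ≥ cf trees A := List.rel_of_pairwise_cons hsort hAM'
            linarith
        · exact hnov
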